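/- Let a ∈ C²(ℝ) with a(s) ≥ ν > 0 for all s ∈ ℝ, let p > 1 and m > 0, let g be the solution of g'(s) = 1/√(a(g(s))), g(0) = 0, and define for s > 0: h(s) = g(s) g'(s) (g(s)^{p−1} − m), K(s) = (h'(s) + s h''(s)) h(s) − s (h'(s))², 𝓗₁(s) = −(1/2) a''(g(s)) s g(s)² (g'(s))³ + (3/4)(a'(g(s)))² s g(s)² (g'(s))⁵ − (1/2) a'(g(s)) g(s) (g'(s))² (p s g'(s) + g(s)) − p s g'(s) + p g(s), and 𝓗₂(s) = −(1/2) a'(g(s)) s g(s) (g'(s))³ + g(s) − p s g'(s). Then for every s > 0 the strict inequality K(s) < m² (g'(s))³ (g(s)^{p−1}/m − 1) [ (g(s)^{p−1}/m − 1) 𝓗₁(s) + (p−1) 𝓗₂(s) ] holds. -/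

import Mathlib

open Filter Real Topology

theorem K_strict_upper_bound
    (a : ℝ → ℝ) (ν : ℝ) (hν : 0 < ν)
    (ha : ContDiff ℝ 2 a) (hbound : ∀ s, ν ≤ a s)
    (p m : ℝ) (hp : 1 < p) (hm : 0 < m)
    (g : ℝ → ℝ)
    (hg : ∀ s, HasDerivAt g (1 / Real.sqrt (a (g s))) s) (hg0 : g 0 = 0)
    (h K H₁ H₂ : ℝ → ℝ)
    (hh : ∀ s > (0 : ℝ), h s = g s * deriv g s * (g s ^ (p - 1) - m))
    (hK : ∀ s > (0 : ℝ),
      K s = (deriv h s + s * deriv (deriv h) s) * h s - s * (deriv h s) ^ 2)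
    (hH₁ : ∀ s > (0 : ℝ),
      H₁ s = -(1 / 2) * deriv (deriv a) (g s) * s * (g s) ^ 2 * (deriv g s) ^ 3
        + (3 / 4) * (deriv a (g s)) ^ 2 * s * (g s) ^ 2 * (deriv g s) ^ 5
        - (1 / 2) * deriv a (g s) * g s * (deriv g s) ^ 2 * (p * s * deriv g s + g s)
        - p * s * deriv g s + p * g s)
    (hH₂ : ∀ s > (0 : ℝ),
      H₂ s = -(1 / 2) * deriv a (g s) * s * g s * (deriv g s) ^ 3
        + g s - p * s * deriv g s) :
    ∀ s > (0 : ℝ),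
      K s < m ^ 2 * (deriv g s) ^ 3 * (g s ^ (p - 1) / m - 1) *
        ((g s ^ (p - 1) / m - 1) * H₁ s + (p - 1) * H₂ s) := by
  -- basic positivity facts
  have hapos : ∀ x, 0 < a x := fun x => lt_of_lt_of_le hν (hbound x)
  have hsqpos : ∀ x, 0 < Real.sqrt (a x) := fun x => Real.sqrt_pos.mpr (hapos x)
  have hg' : ∀ s, deriv g s = 1 / Real.sqrt (a (g s)) := fun s => (hg s).deriv
  have hGpos : ∀ s, 0 < deriv g s := by
    intro s; rw [hg' s]; exact div_pos one_pos (hsqpos _)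
  have hg2 : ∀ s, HasDerivAt g (deriv g s) s := fun s => by
    rw [hg' s]; exact hg s
  have hgmono : StrictMono g := strictMono_of_deriv_pos hGpos
  have hgpos : ∀ s > (0 : ℝ), 0 < g s := fun s hs => by
    have := hgmono hs; rwa [hg0] at this
  have hsqrt_eq : ∀ s, Real.sqrt (a (g s)) = (deriv g s)⁻¹ := fun s => by
    rw [hg' s, one_div, inv_inv]
  -- regularity of a
  have hadiff : Differentiable ℝ a := ha.differentiable two_ne_zero
  have ha1 : ContDiff ℝ 1 (deriv a) := by
    have : ContDiff ℝ (1 + 1) a := by norm_num; exact ha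
    exact (contDiff_succ_iff_deriv.mp this).2.2
  have ha'diff : Differentiable ℝ (deriv a) := ha1.differentiable one_ne_zero
  -- derivative of a ∘ g
  have hag : ∀ s, HasDerivAt (fun t => a (g t)) (deriv a (g s) * deriv g s) s := fun s =>
    (hadiff (g s)).hasDerivAt.comp s (hg2 s)
  have hA1 : ∀ s, HasDerivAt (fun t => deriv a (g t))
      (deriv (deriv a) (g s) * deriv g s) s := fun s =>
    (ha'diff (g s)).hasDerivAt.comp s (hg2 s)
  -- derivative of deriv g
  have hG : ∀ s, HasDerivAt (fun t => deriv g t)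
      (-(1 / 2) * deriv a (g s) * (deriv g s) ^ 4) s := by
    intro s
    have hfun : (fun t => deriv g t) = fun t => (Real.sqrt (a (g t)))⁻¹ := by
      funext t; rw [hg' t, one_div]
    rw [hfun]
    have hsq : HasDerivAt (fun t => Real.sqrt (a (g t)))
        (1 / (2 * Real.sqrt (a (g s))) * (deriv a (g s) * deriv g s)) s :=
      (Real.hasDerivAt_sqrt (hapos (g s)).ne').comp s (hag s)
    have hinv := hsq.inv (hsqpos (g s)).ne'
    refine hinv.congr_deriv ?_
    rw [hsqrt_eq s]
    have hG0 := (hGpos s).ne'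
    field_simp
  -- derivative of g ^ (p-1)
  have hu : ∀ s > (0 : ℝ), HasDerivAt (fun t => g t ^ (p - 1))
      ((p - 1) * g s ^ (p - 2) * deriv g s) s := by
    intro s hs
    have := (Real.hasDerivAt_rpow_const (p := p - 1)
      (Or.inl (hgpos s hs).ne')).comp s (hg2 s)
    refine this.congr_deriv ?_
    ring_nf
  -- explicit first derivative of h
  set F1 : ℝ → ℝ := fun t =>
    (deriv g t) ^ 2 * (p * g t ^ (p - 1) - m) -
      1 / 2 * (deriv a (g t) * g t * (deriv g t) ^ 4 * (g t ^ (p - 1) - m)) with hF1def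
  have hvx : ∀ s > (0 : ℝ), g s ^ (p - 2) * g s = g s ^ (p - 1) := by
    intro s hs
    rw [← Real.rpow_add_one (hgpos s hs).ne' (p - 2)]
    congr 1
    ring
  have hhd : ∀ s > (0 : ℝ), HasDerivAt (fun t => g t * deriv g t * (g t ^ (p - 1) - m))
      (F1 s) s := by
    intro s hs
    have := ((hg2 s).mul (hG s)).mul ((hu s hs).sub_const m)
    refine this.congr_deriv ?_
    simp only [hF1def, Pi.mul_apply]
    rw [← hvx s hs]
    ring
  have hDh : ∀ s > (0 : ℝ), deriv h s = F1 s := by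
    intro s hs
    have hev : h =ᶠ[𝓝 s] fun t => g t * deriv g t * (g t ^ (p - 1) - m) := by
      filter_upwards [isOpen_Ioi.mem_nhds hs] with t ht using hh t ht
    rw [hev.deriv_eq, (hhd s hs).deriv]
  -- explicit second derivative of h
  set F2 : ℝ → ℝ := fun t =>
    -(deriv a (g t)) * (deriv g t) ^ 5 * (p * g t ^ (p - 1) - m)
      + p * (p - 1) * g t ^ (p - 2) * (deriv g t) ^ 3
      - 1 / 2 * deriv (deriv a) (g t) * g t * (deriv g t) ^ 5 * (g t ^ (p - 1) - m)
      - 1 / 2 * deriv a (g t) * (deriv g t) ^ 5 * (g t ^ (p - 1) - m)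
      + (deriv a (g t)) ^ 2 * g t * (deriv g t) ^ 7 * (g t ^ (p - 1) - m)
      - 1 / 2 * (p - 1) * deriv a (g t) * g t ^ (p - 2) * g t * (deriv g t) ^ 5 with hF2def
  have hF1d : ∀ s > (0 : ℝ), HasDerivAt F1 (F2 s) s := by
    intro s hs
    have t1 : HasDerivAt (fun t => (deriv g t) ^ 2 * (p * g t ^ (p - 1) - m))
        ((2 * (deriv g s) ^ 1 * (-(1 / 2) * deriv a (g s) * (deriv g s) ^ 4))
          * (p * g s ^ (p - 1) - m)
          + (deriv g s) ^ 2 * (p * ((p - 1) * g s ^ (p - 2) * deriv g s))) s :=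
      ((hG s).pow 2).mul (((hu s hs).const_mul p).sub_const m)
    have t2 : HasDerivAt
        (fun t => deriv a (g t) * g t * (deriv g t) ^ 4 * (g t ^ (p - 1) - m))
        (((deriv (deriv a) (g s) * deriv g s * g s + deriv a (g s) * deriv g s)
            * (deriv g s) ^ 4
          + deriv a (g s) * g s
            * (4 * (deriv g s) ^ 3 * (-(1 / 2) * deriv a (g s) * (deriv g s) ^ 4)))
          * (g s ^ (p - 1) - m)
          + deriv a (g s) * g s * (deriv g s) ^ 4
            * ((p - 1) * g s ^ (p - 2) * deriv g s)) s :=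
      (((hA1 s).mul (hg2 s)).mul ((hG s).pow 4)).mul ((hu s hs).sub_const m)
    have := t1.sub (t2.const_mul (1 / 2))
    refine this.congr_deriv ?_
    simp only [hF2def]
    rw [← hvx s hs]
    ring
  have hDDh : ∀ s > (0 : ℝ), deriv (deriv h) s = F2 s := by
    intro s hs
    have hev : deriv h =ᶠ[𝓝 s] F1 := by
      filter_upwards [isOpen_Ioi.mem_nhds hs] with t ht using hDh t ht
    rw [hev.deriv_eq, (hF1d s hs).deriv]
  -- conclusion
  intro s hs
  have hKs := hK s hs
  rw [hh s hs, hDh s hs, hDDh s hs] at hKs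
  rw [hKs, hH₁ s hs, hH₂ s hs]
  simp only [hF1def, hF2def]
  have key :
      (((deriv g s) ^ 2 * (p * g s ^ (p - 1) - m) -
          1 / 2 * (deriv a (g s) * g s * (deriv g s) ^ 4 * (g s ^ (p - 1) - m)))
        + s * (-(deriv a (g s)) * (deriv g s) ^ 5 * (p * g s ^ (p - 1) - m)
          + p * (p - 1) * g s ^ (p - 2) * (deriv g s) ^ 3
          - 1 / 2 * deriv (deriv a) (g s) * g s * (deriv g s) ^ 5 * (g s ^ (p - 1) - m)
          - 1 / 2 * deriv a (g s) * (deriv g s) ^ 5 * (g s ^ (p - 1) - m)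
          + (deriv a (g s)) ^ 2 * g s * (deriv g s) ^ 7 * (g s ^ (p - 1) - m)
          - 1 / 2 * (p - 1) * deriv a (g s) * g s ^ (p - 2) * g s * (deriv g s) ^ 5))
        * (g s * deriv g s * (g s ^ (p - 1) - m))
      - s * ((deriv g s) ^ 2 * (p * g s ^ (p - 1) - m) -
          1 / 2 * (deriv a (g s) * g s * (deriv g s) ^ 4 * (g s ^ (p - 1) - m))) ^ 2
      = m ^ 2 * (deriv g s) ^ 3 * (g s ^ (p - 1) / m - 1) *
        ((g s ^ (p - 1) / m - 1) *
          (-(1 / 2) * deriv (deriv a) (g s) * s * (g s) ^ 2 * (deriv g s) ^ 3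
            + (3 / 4) * (deriv a (g s)) ^ 2 * s * (g s) ^ 2 * (deriv g s) ^ 5
            - (1 / 2) * deriv a (g s) * g s * (deriv g s) ^ 2 * (p * s * deriv g s + g s)
            - p * s * deriv g s + p * g s)
          + (p - 1) *
            (-(1 / 2) * deriv a (g s) * s * g s * (deriv g s) ^ 3
              + g s - p * s * deriv g s))
        - s * m ^ 2 * (p - 1) ^ 2 * (deriv g s) ^ 4 := by
    rw [← hvx s hs]
    have hm0 := hm.ne'
    field_simp
    ring
  rw [key]
  have hpos : 0 < s * m ^ 2 * (p - 1) ^ 2 * (deriv g s) ^ 4 := by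
    have := hGpos s
    have hp1 : (0:ℝ) < p - 1 := by linarith
    positivity
  linarith
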